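/- Let T be a tree and T_i obtained from T by any of the four operations O_1–O_4 (as in the paper). Then γ_t(T) - τ(T) = γ_t(T_i) - τ(T_i); in particular γ_t(T) = τ(T) if and only if γ_t(T_i) = τ(T_i). -/

import Mathlib

open SimpleGraph

/-- `D` is a total dominating set of `G`: every vertex has a neighbor in `D`. -/
def IsTotalDomSet {V : Type*} (G : SimpleGraph V) (D : Finset V) : Prop :=
  ∀ v : V, ∃ u ∈ D, G.Adj v u

/-- `X` is a vertex cover of `G`: every edge has an endpoint in `X`. -/
def IsVertexCover {V : Type*} (G : SimpleGraph V) (X : Finset V) : Prop :=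
  ∀ ⦃a b : V⦄, G.Adj a b → a ∈ X ∨ b ∈ X

/-- The total domination number `γ_t(G)`. -/
noncomputable def gammaT {V : Type*} (G : SimpleGraph V) : ℕ :=
  sInf {n | ∃ D : Finset V, IsTotalDomSet G D ∧ D.card = n}

/-- The vertex cover number `τ(G)`. -/
noncomputable def tau {V : Type*} (G : SimpleGraph V) : ℕ :=
  sInf {n | ∃ X : Finset V, _root_.IsVertexCover G X ∧ X.card = n}

/-- A `(γ_t-τ)`-set: simultaneously a minimum total dominating set and a
minimum vertex cover. -/
def IsGttSet {V : Type*} (G : SimpleGraph V) (D : Finset V) : Prop :=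
  IsTotalDomSet G D ∧ _root_.IsVertexCover G D ∧ D.card = gammaT G ∧ D.card = tau G

/-- The sum `G +_{uv} H`: the disjoint union of `G` and `H` with the extra edge `uv`. -/
def graphSum {α β : Type*} (G : SimpleGraph α) (H : SimpleGraph β) (u : α) (v : β) :
    SimpleGraph (α ⊕ β) :=
  SimpleGraph.fromRel (fun x y =>
    (∃ a b, x = Sum.inl a ∧ y = Sum.inl b ∧ G.Adj a b) ∨
    (∃ a b, x = Sum.inr a ∧ y = Sum.inr b ∧ H.Adj a b) ∨
    (x = Sum.inl u ∧ y = Sum.inr v))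

/-- The private neighborhood `pn(u,S) = {w : N(w) ∩ S = {u}}`. -/
def pn {V : Type*} (G : SimpleGraph V) (S : Finset V) (u : V) : Set V :=
  {w | G.neighborSet w ∩ ↑S = {u}}

/-- `v` is quasi-isolated: for some minimum total dominating set `S` there is
`u ∈ S` with `pn(u,S) = {v}`. -/
def QuasiIsolated {V : Type*} (G : SimpleGraph V) (v : V) : Prop :=
  ∃ S : Finset V, IsTotalDomSet G S ∧ S.card = gammaT G ∧ ∃ u ∈ S, pn G S u = {v}

/-- An end vertex: a vertex of degree 1. -/
def IsEndVertex {V : Type*} (G : SimpleGraph V) (v : V) : Prop :=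
  (G.neighborSet v).ncard = 1

/-- `T'` has the same difference `γ_t - τ` as `T` (and the same equality `γ_t = τ`). -/
def PreservesGtTau {V W : Type*} (T : SimpleGraph V) (T' : SimpleGraph W) : Prop :=
  ((gammaT T' : ℤ) - (tau T' : ℤ) = (gammaT T : ℤ) - (tau T : ℤ)) ∧
  (gammaT T = tau T ↔ gammaT T' = tau T')

section Basics
variable {V : Type*} {G : SimpleGraph V}

lemma gammaT_le {D : Finset V} (h : IsTotalDomSet G D) : gammaT G ≤ D.card :=
  Nat.sInf_le ⟨D, h, rfl⟩

lemma tau_le {X : Finset V} (h : _root_.IsVertexCover G X) : tau G ≤ X.card :=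
  Nat.sInf_le ⟨X, h, rfl⟩

lemma le_gammaT {n : ℕ} (hne : ∃ D : Finset V, IsTotalDomSet G D)
    (h : ∀ D : Finset V, IsTotalDomSet G D → n ≤ D.card) : n ≤ gammaT G := by
  obtain ⟨D, hD⟩ := hne
  exact le_csInf ⟨D.card, D, hD, rfl⟩ (by rintro b ⟨D', hD', rfl⟩; exact h D' hD')

lemma le_tau {n : ℕ} (hne : ∃ X : Finset V, _root_.IsVertexCover G X)
    (h : ∀ X : Finset V, _root_.IsVertexCover G X → n ≤ X.card) : n ≤ tau G := by
  obtain ⟨X, hX⟩ := hne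
  exact le_csInf ⟨X.card, X, hX, rfl⟩ (by rintro b ⟨X', hX', rfl⟩; exact h X' hX')

lemma gammaT_set_exists (hne : ∃ D : Finset V, IsTotalDomSet G D) :
    ∃ D : Finset V, IsTotalDomSet G D ∧ D.card = gammaT G := by
  obtain ⟨D, hD⟩ := hne
  exact Nat.sInf_mem (⟨D.card, D, hD, rfl⟩ :
    Set.Nonempty {n | ∃ D : Finset V, IsTotalDomSet G D ∧ D.card = n})

lemma tau_set_exists (hne : ∃ X : Finset V, _root_.IsVertexCover G X) :
    ∃ X : Finset V, _root_.IsVertexCover G X ∧ X.card = tau G := by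
  obtain ⟨X, hX⟩ := hne
  exact Nat.sInf_mem (⟨X.card, X, hX, rfl⟩ :
    Set.Nonempty {n | ∃ X : Finset V, _root_.IsVertexCover G X ∧ X.card = n})

lemma gammaT_eq_zero (h : ∀ D : Finset V, ¬ IsTotalDomSet G D) : gammaT G = 0 :=
  Nat.sInf_eq_zero.2 (Or.inr (Set.eq_empty_iff_forall_notMem.2
    (by rintro n ⟨D, hD, -⟩; exact h D hD)))

lemma tau_eq_zero (h : ∀ X : Finset V, ¬ _root_.IsVertexCover G X) : tau G = 0 :=
  Nat.sInf_eq_zero.2 (Or.inr (Set.eq_empty_iff_forall_notMem.2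
    (by rintro n ⟨X, hX, -⟩; exact h X hX)))

end Basics

lemma preserves_of_add {V W : Type*} {T : SimpleGraph V} {T' : SimpleGraph W} (k : ℕ)
    (h1 : gammaT T' = gammaT T + k) (h2 : tau T' = tau T + k) : PreservesGtTau T T' := by
  constructor
  · rw [h1, h2]; push_cast; ring
  · rw [h1, h2]; omega
section GS
open Sum
variable {V W : Type*} {G : SimpleGraph V} {H : SimpleGraph W} {u : V} {v₀ : W}

lemma gs_ll {a b : V} : (graphSum G H u v₀).Adj (inl a) (inl b) ↔ G.Adj a b := by
  constructor
  · rintro ⟨-, (⟨a', b', h1, h2, h3⟩ | ⟨a', b', h1, h2, h3⟩ | ⟨h1, h2⟩) |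
      (⟨a', b', h1, h2, h3⟩ | ⟨a', b', h1, h2, h3⟩ | ⟨h1, h2⟩)⟩ <;> simp_all
    · exact h3.symm
  · intro h
    exact ⟨by simpa using h.ne, Or.inl (Or.inl ⟨a, b, rfl, rfl, h⟩)⟩

lemma gs_rr {a b : W} : (graphSum G H u v₀).Adj (inr a) (inr b) ↔ H.Adj a b := by
  constructor
  · rintro ⟨-, (⟨a', b', h1, h2, h3⟩ | ⟨a', b', h1, h2, h3⟩ | ⟨h1, h2⟩) |
      (⟨a', b', h1, h2, h3⟩ | ⟨a', b', h1, h2, h3⟩ | ⟨h1, h2⟩)⟩ <;> simp_all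
    · exact h3.symm
  · intro h
    exact ⟨by simpa using h.ne, Or.inl (Or.inr (Or.inl ⟨a, b, rfl, rfl, h⟩))⟩

lemma gs_lr {a : V} {b : W} :
    (graphSum G H u v₀).Adj (inl a) (inr b) ↔ a = u ∧ b = v₀ := by
  constructor
  · rintro ⟨-, (⟨a', b', h1, h2, h3⟩ | ⟨a', b', h1, h2, h3⟩ | ⟨h1, h2⟩) |
      (⟨a', b', h1, h2, h3⟩ | ⟨a', b', h1, h2, h3⟩ | ⟨h1, h2⟩)⟩ <;> simp_all
  · rintro ⟨rfl, rfl⟩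
    exact ⟨by simp, Or.inl (Or.inr (Or.inr ⟨rfl, rfl⟩))⟩

lemma disj_lr (X : Finset V) (S : Finset W) :
    Disjoint (X.map ⟨inl, inl_injective⟩) (S.map ⟨inr, inr_injective⟩) := by
  simp [Finset.disjoint_left]

/-- the canonical up set -/
def upSet (X : Finset V) (S : Finset W) : Finset (V ⊕ W) :=
  (X.map ⟨inl, inl_injective⟩).disjUnion (S.map ⟨inr, inr_injective⟩) (disj_lr X S)

lemma card_upSet (X : Finset V) (S : Finset W) : (upSet X S).card = X.card + S.card := by
  simp [upSet]

lemma mem_upSet_inl {X : Finset V} {S : Finset W} {a : V} :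
    inl a ∈ upSet X S ↔ a ∈ X := by simp [upSet]

lemma mem_upSet_inr {X : Finset V} {S : Finset W} {a : W} :
    inr a ∈ upSet X S ↔ a ∈ S := by simp [upSet]

lemma dom_up {D : Finset V} (hD : IsTotalDomSet G D) {S : Finset W}
    (hS : ∀ w : W, (∃ s ∈ S, H.Adj w s) ∨ (w = v₀ ∧ u ∈ D)) :
    IsTotalDomSet (graphSum G H u v₀) (upSet D S) := by
  rintro (a | a)
  · obtain ⟨d, hd, hadj⟩ := hD a
    exact ⟨inl d, mem_upSet_inl.2 hd, gs_ll.2 hadj⟩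
  · rcases hS a with ⟨s, hs, hadj⟩ | ⟨rfl, hu⟩
    · exact ⟨inr s, mem_upSet_inr.2 hs, gs_rr.2 hadj⟩
    · exact ⟨inl u, mem_upSet_inl.2 hu, (gs_lr.2 ⟨rfl, rfl⟩).symm⟩

lemma cover_up {X : Finset V} (hX : _root_.IsVertexCover G X) {S : Finset W}
    (hS : ∀ ⦃a b : W⦄, H.Adj a b → a ∈ S ∨ b ∈ S) (hu : u ∈ X ∨ v₀ ∈ S) :
    _root_.IsVertexCover (graphSum G H u v₀) (upSet X S) := by
  rintro (a | a) (b | b) hadj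
  · rcases hX (gs_ll.1 hadj) with h | h
    · exact Or.inl (mem_upSet_inl.2 h)
    · exact Or.inr (mem_upSet_inl.2 h)
  · obtain ⟨rfl, rfl⟩ := gs_lr.1 hadj
    rcases hu with h | h
    · exact Or.inl (mem_upSet_inl.2 h)
    · exact Or.inr (mem_upSet_inr.2 h)
  · obtain ⟨rfl, rfl⟩ := gs_lr.1 hadj.symm
    rcases hu with h | h
    · exact Or.inr (mem_upSet_inl.2 h)
    · exact Or.inl (mem_upSet_inr.2 h)
  · rcases hS (gs_rr.1 hadj) with h | h
    · exact Or.inl (mem_upSet_inr.2 h)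
    · exact Or.inr (mem_upSet_inr.2 h)

lemma cover_toLeft {X : Finset (V ⊕ W)} (h : _root_.IsVertexCover (graphSum G H u v₀) X) :
    _root_.IsVertexCover G X.toLeft := by
  intro a b hab
  rcases h (gs_ll.2 hab) with h' | h'
  · exact Or.inl (Finset.mem_toLeft.2 h')
  · exact Or.inr (Finset.mem_toLeft.2 h')

lemma dom_down_insert [DecidableEq V] {D : Finset (V ⊕ W)}
    (hD : IsTotalDomSet (graphSum G H u v₀) D) {w : V} (hw : G.Adj u w) :
    IsTotalDomSet G (insert w D.toLeft) := by
  intro v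
  obtain ⟨x, hx, hadj⟩ := hD (inl v)
  cases x with
  | inl d => exact ⟨d, Finset.mem_insert_of_mem (Finset.mem_toLeft.2 hx), gs_ll.1 hadj⟩
  | inr b =>
    obtain ⟨rfl, rfl⟩ := gs_lr.1 hadj
    exact ⟨w, Finset.mem_insert_self _ _, hw⟩

lemma dom_down {D : Finset (V ⊕ W)} (hD : IsTotalDomSet (graphSum G H u v₀) D)
    (hcond : inr v₀ ∉ D ∨ ∃ a ∈ D.toLeft, G.Adj u a) : IsTotalDomSet G D.toLeft := by
  intro v
  obtain ⟨x, hx, hadj⟩ := hD (inl v)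
  cases x with
  | inl d => exact ⟨d, Finset.mem_toLeft.2 hx, gs_ll.1 hadj⟩
  | inr b =>
    obtain ⟨rfl, rfl⟩ := gs_lr.1 hadj
    rcases hcond with h | ⟨a, ha, hau⟩
    · exact absurd hx h
    · exact ⟨a, ha, hau⟩

lemma qi_of_min [DecidableEq V] {D : Finset (V ⊕ W)}
    (hD : IsTotalDomSet (graphSum G H u v₀) D) {w : V} (hw : G.Adj u w)
    (hA : ∀ a ∈ D.toLeft, ¬ G.Adj u a)
    (hcard : (insert w D.toLeft).card = gammaT G) : QuasiIsolated G u := by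
  have hwA : w ∉ D.toLeft := fun h => hA w h hw
  refine ⟨insert w D.toLeft, dom_down_insert hD hw, hcard, w, Finset.mem_insert_self _ _, ?_⟩
  ext x
  simp only [pn, Set.mem_setOf_eq, Set.mem_singleton_iff]
  constructor
  · intro hx
    obtain ⟨y, hy, hadj⟩ := hD (inl x)
    cases y with
    | inl d =>
      have hdA : d ∈ D.toLeft := Finset.mem_toLeft.2 hy
      have hmem : d ∈ G.neighborSet x ∩ ↑(insert w D.toLeft) :=
        ⟨gs_ll.1 hadj, by simp [hdA]⟩
      rw [hx] at hmem
      exact absurd (hmem ▸ hdA) hwA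
    | inr b => exact (gs_lr.1 hadj).1
  · rintro rfl
    ext y
    simp only [Set.mem_inter_iff, mem_neighborSet, Finset.coe_insert, Set.mem_insert_iff,
      Finset.mem_coe, Set.mem_singleton_iff]
    constructor
    · rintro ⟨hadj, rfl | hyA⟩
      · rfl
      · exact absurd hadj (hA y hyA)
    · rintro rfl
      exact ⟨hw, Or.inl rfl⟩

end GS
section Tree
variable {V : Type*} {G : SimpleGraph V}

lemma no_triangle (hG : G.IsAcyclic) {a b c : V} (hab : G.Adj a b) (hbc : G.Adj b c)
    (hac : G.Adj a c) : False := by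
  have hu := SimpleGraph.isAcyclic_iff_path_unique.1 hG
  have hp2 : (SimpleGraph.Walk.cons hab (SimpleGraph.Walk.cons hbc SimpleGraph.Walk.nil)).IsPath := by
    simp [SimpleGraph.Walk.isPath_def, hab.ne, hbc.ne, hac.ne]
  have := hu (SimpleGraph.Path.singleton hac) ⟨_, hp2⟩
  have hlen := congrArg (fun p : G.Path a c => p.1.length) this
  simp [SimpleGraph.Path.singleton] at hlen

lemma four_path_unique (hG : G.IsAcyclic) {d1 d2 v y v' y' : V}
    (h1 : G.Adj d1 v) (h2 : G.Adj v y) (h3 : G.Adj y d2)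
    (h1' : G.Adj d1 v') (h2' : G.Adj v' y') (h3' : G.Adj y' d2)
    (hd1y : d1 ≠ y) (hvd2 : v ≠ d2) (hd1y' : d1 ≠ y') (hvd2' : v' ≠ d2) :
    v = v' ∧ y = y' := by
  have hd12 : d1 ≠ d2 := by
    rintro rfl
    exact no_triangle hG h2 h3 h1.symm
  have hu := SimpleGraph.isAcyclic_iff_path_unique.1 hG
  have hp : (SimpleGraph.Walk.cons h1 (SimpleGraph.Walk.cons h2
      (SimpleGraph.Walk.cons h3 SimpleGraph.Walk.nil))).IsPath := by
    simp [SimpleGraph.Walk.isPath_def, h1.ne, h2.ne, h3.ne, hd1y, hvd2, hd12]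
  have hq : (SimpleGraph.Walk.cons h1' (SimpleGraph.Walk.cons h2'
      (SimpleGraph.Walk.cons h3' SimpleGraph.Walk.nil))).IsPath := by
    simp [SimpleGraph.Walk.isPath_def, h1'.ne, h2'.ne, h3'.ne, hd1y', hvd2', hd12]
  have := hu ⟨_, hp⟩ ⟨_, hq⟩
  have hs := congrArg (fun p : G.Path d1 d2 => p.1.support) this
  simp [SimpleGraph.Walk.support_cons] at hs
  exact ⟨hs.1, hs.2⟩

lemma exists_adj_of_conn (hc : G.Connected) {v x : V} (hne : x ≠ v) :
    ∃ w, G.Adj v w := by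
  obtain ⟨p⟩ := hc.preconnected v x
  exact ⟨p.getVert 1, SimpleGraph.Walk.adj_snd
    (SimpleGraph.Walk.not_nil_of_ne (Ne.symm hne))⟩

lemma dom_of_cover (hdeg : ∀ v : V, ∃ w, G.Adj v w) {X : Finset V}
    (hX : _root_.IsVertexCover G X) : ∃ D : Finset V, IsTotalDomSet G D := by
  classical
  refine ⟨X ∪ X.image (fun x => Classical.choose (hdeg x)), fun v => ?_⟩
  obtain ⟨w, hw⟩ := hdeg v
  rcases hX hw with h | h
  · exact ⟨Classical.choose (hdeg v),
      Finset.mem_union_right _ (Finset.mem_image_of_mem _ h), Classical.choose_spec (hdeg v)⟩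
  · exact ⟨w, Finset.mem_union_left _ h, hw⟩

lemma cover_of_dom (hG : G.IsAcyclic) {D : Finset V} (hD : IsTotalDomSet G D) :
    ∃ X : Finset V, _root_.IsVertexCover G X := by
  classical
  set M : Set V := {v | v ∉ D ∧ ∃ y, G.Adj v y ∧ y ∉ D} with hM
  have hMfin : M.Finite := by
    have key : ∀ m : M, ∃ p : V × V, p.1 ∈ D ∧ p.2 ∈ D ∧
        ∃ y, G.Adj (m : V) y ∧ y ∉ D ∧ G.Adj (m : V) p.1 ∧ G.Adj y p.2 := by
      rintro ⟨v, hvD, y, hvy, hyD⟩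
      obtain ⟨d1, hd1D, hd1⟩ := hD v
      obtain ⟨d2, hd2D, hd2⟩ := hD y
      exact ⟨(d1, d2), hd1D, hd2D, y, hvy, hyD, hd1, hd2⟩
    choose f hf1 hf2 hf3 using key
    have hinj : Function.Injective f := by
      rintro m m' hff
      obtain ⟨y, hvy, hyD, hd1, hd2⟩ := hf3 m
      obtain ⟨y', hvy', hyD', hd1', hd2'⟩ := hf3 m'
      rw [hff] at hd1 hd2
      have := four_path_unique hG hd1.symm hvy hd2 hd1'.symm hvy' hd2'
        (fun h => hyD (h ▸ hf1 m')) (fun h => m.2.1 (h ▸ hf2 m'))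
        (fun h => hyD' (h ▸ hf1 m')) (fun h => m'.2.1 (h ▸ hf2 m'))
      exact Subtype.ext this.1
    have hfin : Finite M := by
      have hrange : ∀ m : M, f m ∈ (D ×ˢ D : Finset (V × V)) := fun m =>
        Finset.mem_product.2 ⟨hf1 m, hf2 m⟩
      exact Finite.of_injective
        (fun m : M => (⟨f m, hrange m⟩ : {p // p ∈ (D ×ˢ D : Finset (V × V))}))
        (fun a b hab => hinj (congrArg Subtype.val hab))
    exact Set.finite_coe_iff.1 hfin
  refine ⟨D ∪ hMfin.toFinset, fun a b hab => ?_⟩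
  by_cases haD : a ∈ D
  · exact Or.inl (Finset.mem_union_left _ haD)
  by_cases hbD : b ∈ D
  · exact Or.inr (Finset.mem_union_left _ hbD)
  · refine Or.inl (Finset.mem_union_right _ ?_)
    rw [Set.Finite.mem_toFinset]
    exact ⟨haD, b, hab, hbD⟩

end Tree
section Ops
open Sum
variable {V : Type*} {T : SimpleGraph V} {u : V}

lemma op2 {D : Finset V} (hD : IsGttSet T D) (hu : u ∈ D) :
    PreservesGtTau T (graphSum T (⊥ : SimpleGraph Unit) u ()) := by
  classical
  obtain ⟨hdom, hcov, hγ, hτ⟩ := hD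
  obtain ⟨w, hwD, hw⟩ := hdom u
  set G' := graphSum T (⊥ : SimpleGraph Unit) u () with hG'
  have hup : IsTotalDomSet G' (upSet D (∅ : Finset Unit)) :=
    dom_up hdom (fun w' => Or.inr ⟨rfl, hu⟩)
  have hcup : _root_.IsVertexCover G' (upSet D (∅ : Finset Unit)) :=
    cover_up hcov (fun a b hab => absurd hab (by simp)) (Or.inl hu)
  have hγ' : gammaT G' = gammaT T := by
    apply le_antisymm
    · calc gammaT G' ≤ (upSet D ∅).card := gammaT_le hup
        _ = D.card := by simp [card_upSet]
        _ = gammaT T := hγ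
    · refine le_gammaT ⟨_, hup⟩ (fun D' hD' => ?_)
      by_cases h0 : inr () ∈ D'
      · have h1 : IsTotalDomSet T (insert w D'.toLeft) := dom_down_insert hD' hw
        have h2 : gammaT T ≤ D'.toLeft.card + 1 :=
          le_trans (gammaT_le h1) (Finset.card_insert_le _ _)
        have h3 : 1 ≤ D'.toRight.card := Finset.card_pos.2 ⟨(), Finset.mem_toRight.2 h0⟩
        have h4 := Finset.card_toLeft_add_card_toRight (u := D')
        omega
      · have h1 : IsTotalDomSet T D'.toLeft := dom_down hD' (Or.inl h0)
        exact le_trans (gammaT_le h1) Finset.card_toLeft_le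
  have hτ' : tau G' = tau T := by
    apply le_antisymm
    · calc tau G' ≤ (upSet D ∅).card := tau_le hcup
        _ = D.card := by simp [card_upSet]
        _ = tau T := hτ
    · exact le_tau ⟨_, hcup⟩ (fun X' hX' =>
        le_trans (tau_le (cover_toLeft hX')) Finset.card_toLeft_le)
  exact preserves_of_add 0 (by omega) (by omega)

end Ops
section Ops1
open Sum
variable {V : Type*} {T : SimpleGraph V} {u : V}

lemma two_le_card {α : Type*} {S : Finset α} {a b : α} (ha : a ∈ S) (hb : b ∈ S)
    (hab : a ≠ b) : 2 ≤ S.card :=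
  Finset.one_lt_card.2 ⟨a, ha, b, hb, hab⟩

lemma three_le_card {α : Type*} [DecidableEq α] {S : Finset α} {a b c : α}
    (ha : a ∈ S) (hb : b ∈ S) (hc : c ∈ S)
    (hab : a ≠ b) (hac : a ≠ c) (hbc : b ≠ c) : 3 ≤ S.card := by
  have hsub : ({a, b, c} : Finset α) ⊆ S := by
    intro x hx
    simp only [Finset.mem_insert, Finset.mem_singleton] at hx
    rcases hx with rfl | rfl | rfl <;> assumption
  calc 3 = ({a, b, c} : Finset α).card := by
        rw [Finset.card_insert_of_notMem (by simp [hab, hac]),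
          Finset.card_insert_of_notMem (by simp [hbc]), Finset.card_singleton]
    _ ≤ S.card := Finset.card_le_card hsub

lemma p4 {i j : Fin 4} (h : i.val + 1 = j.val ∨ j.val + 1 = i.val) :
    (SimpleGraph.pathGraph 4).Adj i j := SimpleGraph.pathGraph_adj.2 h

lemma op1 {D : Finset V} (hD : IsGttSet T D) (hu : u ∈ D) :
    PreservesGtTau T (graphSum T (SimpleGraph.pathGraph 4) u 0) := by
  classical
  obtain ⟨hdom, hcov, hγ, hτ⟩ := hD
  obtain ⟨w, hwD, hw⟩ := hdom u
  set G' := graphSum T (SimpleGraph.pathGraph 4) u 0 with hG'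
  have hup : IsTotalDomSet G' (upSet D ({1, 2} : Finset (Fin 4))) := by
    refine dom_up hdom (fun x => Or.inl ?_)
    fin_cases x
    · exact ⟨1, by decide, p4 (by decide)⟩
    · exact ⟨2, by decide, p4 (by decide)⟩
    · exact ⟨1, by decide, p4 (by decide)⟩
    · exact ⟨2, by decide, p4 (by decide)⟩
  have hcup : _root_.IsVertexCover G' (upSet D ({1, 3} : Finset (Fin 4))) := by
    refine cover_up hcov (fun a b hab => ?_) (Or.inl hu)
    rw [SimpleGraph.pathGraph_adj] at hab
    fin_cases a <;> fin_cases b <;> revert hab <;> decide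
  have hγ' : gammaT G' = gammaT T + 2 := by
    apply le_antisymm
    · calc gammaT G' ≤ (upSet D {1, 2}).card := gammaT_le hup
        _ = D.card + 2 := by rw [card_upSet]; congr 1
        _ = gammaT T + 2 := by rw [hγ]
    · refine le_gammaT ⟨_, hup⟩ (fun D' hD' => ?_)
      have hcards := Finset.card_toLeft_add_card_toRight (u := D')
      have h2B : (2 : Fin 4) ∈ D'.toRight := by
        obtain ⟨x, hx, hadj⟩ := hD' (inr 3)
        cases x with
        | inl a => exact absurd (gs_lr.1 hadj.symm).2 (by decide)
        | inr b =>
          have hb := gs_rr.1 hadj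
          rw [SimpleGraph.pathGraph_adj] at hb
          have hb2 : b = 2 := by fin_cases b <;> revert hb <;> decide
          exact Finset.mem_toRight.2 (hb2 ▸ hx)
      have h13B : (1 : Fin 4) ∈ D'.toRight ∨ (3 : Fin 4) ∈ D'.toRight := by
        obtain ⟨x, hx, hadj⟩ := hD' (inr 2)
        cases x with
        | inl a => exact absurd (gs_lr.1 hadj.symm).2 (by decide)
        | inr b =>
          have hb := gs_rr.1 hadj
          rw [SimpleGraph.pathGraph_adj] at hb
          have hb13 : b = 1 ∨ b = 3 := by fin_cases b <;> revert hb <;> decide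
          rcases hb13 with rfl | rfl
          · exact Or.inl (Finset.mem_toRight.2 hx)
          · exact Or.inr (Finset.mem_toRight.2 hx)
      by_cases h0 : (0 : Fin 4) ∈ D'.toRight
      · have hB3 : 3 ≤ D'.toRight.card := by
          rcases h13B with h1 | h1
          · exact three_le_card h0 h1 h2B (by decide) (by decide) (by decide)
          · exact three_le_card h0 h2B h1 (by decide) (by decide) (by decide)
        have hlow : gammaT T ≤ D'.toLeft.card + 1 :=
          le_trans (gammaT_le (dom_down_insert hD' hw)) (Finset.card_insert_le _ _)
        omega
      · have hdownT : IsTotalDomSet T D'.toLeft :=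
          dom_down hD' (Or.inl (fun hh => h0 (Finset.mem_toRight.2 hh)))
        have hB2 : 2 ≤ D'.toRight.card := by
          rcases h13B with h1 | h1
          · exact two_le_card h1 h2B (by decide)
          · exact two_le_card h2B h1 (by decide)
        have hlow := gammaT_le hdownT
        omega
  have hτ' : tau G' = tau T + 2 := by
    apply le_antisymm
    · calc tau G' ≤ (upSet D {1, 3}).card := tau_le hcup
        _ = D.card + 2 := by rw [card_upSet]; congr 1
        _ = tau T + 2 := by rw [hτ]
    · refine le_tau ⟨_, hcup⟩ (fun X' hX' => ?_)
      have hcards := Finset.card_toLeft_add_card_toRight (u := X')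
      have hcovT := tau_le (cover_toLeft hX')
      have e01 : (0 : Fin 4) ∈ X'.toRight ∨ (1 : Fin 4) ∈ X'.toRight := by
        rcases hX' ((gs_rr (a := (0 : Fin 4)) (b := 1)).2 (p4 (by decide))) with h | h
        · exact Or.inl (Finset.mem_toRight.2 h)
        · exact Or.inr (Finset.mem_toRight.2 h)
      have e23 : (2 : Fin 4) ∈ X'.toRight ∨ (3 : Fin 4) ∈ X'.toRight := by
        rcases hX' ((gs_rr (a := (2 : Fin 4)) (b := 3)).2 (p4 (by decide))) with h | h
        · exact Or.inl (Finset.mem_toRight.2 h)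
        · exact Or.inr (Finset.mem_toRight.2 h)
      have hB2 : 2 ≤ X'.toRight.card := by
        rcases e01 with h1 | h1 <;> rcases e23 with h2 | h2 <;>
          exact two_le_card h1 h2 (by decide)
      omega
  exact preserves_of_add 2 hγ' hτ'

end Ops1
section Ops3
open Sum
variable {V : Type*} {T : SimpleGraph V} {u : V}

lemma p2 {i j : Fin 2} (h : i.val + 1 = j.val ∨ j.val + 1 = i.val) :
    (SimpleGraph.pathGraph 2).Adj i j := SimpleGraph.pathGraph_adj.2 h

lemma op3 {D : Finset V} (hD : IsGttSet T D) (hu : u ∈ D) (hQI : ¬ QuasiIsolated T u) :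
    PreservesGtTau T (graphSum T (SimpleGraph.pathGraph 2) u 0) := by
  classical
  obtain ⟨hdom, hcov, hγ, hτ⟩ := hD
  obtain ⟨w, hwD, hw⟩ := hdom u
  set G' := graphSum T (SimpleGraph.pathGraph 2) u 0 with hG'
  have hup : IsTotalDomSet G' (upSet D ({0} : Finset (Fin 2))) := by
    refine dom_up hdom (fun x => ?_)
    fin_cases x
    · exact Or.inr ⟨rfl, hu⟩
    · exact Or.inl ⟨0, by decide, p2 (by decide)⟩
  have hcup : _root_.IsVertexCover G' (upSet D ({0} : Finset (Fin 2))) := by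
    refine cover_up hcov (fun a b hab => ?_) (Or.inl hu)
    rw [SimpleGraph.pathGraph_adj] at hab
    fin_cases a <;> fin_cases b <;> revert hab <;> decide
  have hγ' : gammaT G' = gammaT T + 1 := by
    apply le_antisymm
    · calc gammaT G' ≤ (upSet D {0}).card := gammaT_le hup
        _ = D.card + 1 := by rw [card_upSet]; congr 1
        _ = gammaT T + 1 := by rw [hγ]
    · refine le_gammaT ⟨_, hup⟩ (fun D' hD' => ?_)
      have hcards := Finset.card_toLeft_add_card_toRight (u := D')
      have h0B : (0 : Fin 2) ∈ D'.toRight := by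
        obtain ⟨x, hx, hadj⟩ := hD' (inr 1)
        cases x with
        | inl a => exact absurd (gs_lr.1 hadj.symm).2 (by decide)
        | inr b =>
          have hb := gs_rr.1 hadj
          rw [SimpleGraph.pathGraph_adj] at hb
          have hb0 : b = 0 := by fin_cases b <;> revert hb <;> decide
          exact Finset.mem_toRight.2 (hb0 ▸ hx)
      by_contra hlt
      push_neg at hlt
      by_cases hex : ∃ a ∈ D'.toLeft, T.Adj u a
      · have hlow := gammaT_le (dom_down hD' (Or.inr hex))
        have hB1 : 1 ≤ D'.toRight.card := Finset.card_pos.2 ⟨_, h0B⟩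
        omega
      · push_neg at hex
        have hwA : w ∉ D'.toLeft := fun h => hex w h hw
        have hins := gammaT_le (dom_down_insert hD' hw)
        rw [Finset.card_insert_of_notMem hwA] at hins
        by_cases hB2 : 2 ≤ D'.toRight.card
        · omega
        · have hB1 : D'.toRight.card = 1 := by
            have := Finset.card_pos.2 ⟨_, h0B⟩
            omega
          exact hQI (qi_of_min hD' hw hex
            (by rw [Finset.card_insert_of_notMem hwA]; omega))
  have hτ' : tau G' = tau T + 1 := by
    apply le_antisymm
    · calc tau G' ≤ (upSet D {0}).card := tau_le hcup
        _ = D.card + 1 := by rw [card_upSet]; congr 1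
        _ = tau T + 1 := by rw [hτ]
    · refine le_tau ⟨_, hcup⟩ (fun X' hX' => ?_)
      have hcards := Finset.card_toLeft_add_card_toRight (u := X')
      have hcovT := tau_le (cover_toLeft hX')
      have hB1 : 1 ≤ X'.toRight.card := by
        rcases hX' ((gs_rr (a := (0 : Fin 2)) (b := 1)).2 (p2 (by decide))) with h | h
        · exact Finset.card_pos.2 ⟨_, Finset.mem_toRight.2 h⟩
        · exact Finset.card_pos.2 ⟨_, Finset.mem_toRight.2 h⟩
      omega
  exact preserves_of_add 1 hγ' hτ'

end Ops3
section Ops4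
open Sum
variable {V : Type*} {T : SimpleGraph V} {u : V}

lemma op4 (hT : T.IsTree) (hQI : ¬ QuasiIsolated T u) :
    PreservesGtTau T (graphSum T (SimpleGraph.pathGraph 4) u 1) := by
  classical
  set G' := graphSum T (SimpleGraph.pathGraph 4) u 1 with hG'
  by_cases hnb : ∃ w, T.Adj u w
  · obtain ⟨w, hw⟩ := hnb
    have hdeg : ∀ v : V, ∃ x, T.Adj v x := by
      intro v
      by_cases hvu : v = u
      · exact ⟨w, hvu ▸ hw⟩
      · exact exists_adj_of_conn hT.isConnected (show u ≠ v from fun h => hvu h.symm)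
    by_cases hdomne : ∃ D : Finset V, IsTotalDomSet T D
    · -- main case: both parameters of T are attained
      obtain ⟨Dg, hDg, hDgcard⟩ := gammaT_set_exists hdomne
      obtain ⟨Xc, hXc⟩ := cover_of_dom hT.IsAcyclic hDg
      obtain ⟨Xt, hXt, hXtcard⟩ := tau_set_exists ⟨Xc, hXc⟩
      have hup : IsTotalDomSet G' (upSet Dg ({1, 2} : Finset (Fin 4))) := by
        refine dom_up hDg (fun x => Or.inl ?_)
        fin_cases x
        · exact ⟨1, by decide, p4 (by decide)⟩
        · exact ⟨2, by decide, p4 (by decide)⟩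
        · exact ⟨1, by decide, p4 (by decide)⟩
        · exact ⟨2, by decide, p4 (by decide)⟩
      have hcup : _root_.IsVertexCover G' (upSet Xt ({1, 3} : Finset (Fin 4))) := by
        refine cover_up hXt (fun a b hab => ?_) (Or.inr (by decide))
        rw [SimpleGraph.pathGraph_adj] at hab
        fin_cases a <;> fin_cases b <;> revert hab <;> decide
      have hγ' : gammaT G' = gammaT T + 2 := by
        apply le_antisymm
        · calc gammaT G' ≤ (upSet Dg {1, 2}).card := gammaT_le hup
            _ = Dg.card + 2 := by rw [card_upSet]; congr 1
            _ = gammaT T + 2 := by rw [hDgcard]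
        · refine le_gammaT ⟨_, hup⟩ (fun D' hD' => ?_)
          have hcards := Finset.card_toLeft_add_card_toRight (u := D')
          have h1B : (1 : Fin 4) ∈ D'.toRight := by
            obtain ⟨x, hx, hadj⟩ := hD' (inr 0)
            cases x with
            | inl a => exact absurd (gs_lr.1 hadj.symm).2 (by decide)
            | inr b =>
              have hb := gs_rr.1 hadj
              rw [SimpleGraph.pathGraph_adj] at hb
              have hb1 : b = 1 := by fin_cases b <;> revert hb <;> decide
              exact Finset.mem_toRight.2 (hb1 ▸ hx)
          have h2B : (2 : Fin 4) ∈ D'.toRight := by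
            obtain ⟨x, hx, hadj⟩ := hD' (inr 3)
            cases x with
            | inl a => exact absurd (gs_lr.1 hadj.symm).2 (by decide)
            | inr b =>
              have hb := gs_rr.1 hadj
              rw [SimpleGraph.pathGraph_adj] at hb
              have hb2 : b = 2 := by fin_cases b <;> revert hb <;> decide
              exact Finset.mem_toRight.2 (hb2 ▸ hx)
          have hB2 : 2 ≤ D'.toRight.card := two_le_card h1B h2B (by decide)
          by_contra hlt
          push_neg at hlt
          by_cases hex : ∃ a ∈ D'.toLeft, T.Adj u a
          · have hlow := gammaT_le (dom_down hD' (Or.inr hex))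
            omega
          · push_neg at hex
            have hwA : w ∉ D'.toLeft := fun h => hex w h hw
            have hins := gammaT_le (dom_down_insert hD' hw)
            rw [Finset.card_insert_of_notMem hwA] at hins
            by_cases hB3 : 3 ≤ D'.toRight.card
            · omega
            · exact hQI (qi_of_min hD' hw hex
                (by rw [Finset.card_insert_of_notMem hwA]; omega))
      have hτ' : tau G' = tau T + 2 := by
        apply le_antisymm
        · calc tau G' ≤ (upSet Xt {1, 3}).card := tau_le hcup
            _ = Xt.card + 2 := by rw [card_upSet]; congr 1
            _ = tau T + 2 := by rw [hXtcard]
        · refine le_tau ⟨_, hcup⟩ (fun X' hX' => ?_)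
          have hcards := Finset.card_toLeft_add_card_toRight (u := X')
          have hcovT := tau_le (cover_toLeft hX')
          have e01 : (0 : Fin 4) ∈ X'.toRight ∨ (1 : Fin 4) ∈ X'.toRight := by
            rcases hX' ((gs_rr (a := (0 : Fin 4)) (b := 1)).2 (p4 (by decide))) with h | h
            · exact Or.inl (Finset.mem_toRight.2 h)
            · exact Or.inr (Finset.mem_toRight.2 h)
          have e23 : (2 : Fin 4) ∈ X'.toRight ∨ (3 : Fin 4) ∈ X'.toRight := by
            rcases hX' ((gs_rr (a := (2 : Fin 4)) (b := 3)).2 (p4 (by decide))) with h | h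
            · exact Or.inl (Finset.mem_toRight.2 h)
            · exact Or.inr (Finset.mem_toRight.2 h)
          have hB2 : 2 ≤ X'.toRight.card := by
            rcases e01 with h1 | h1 <;> rcases e23 with h2 | h2 <;>
              exact two_le_card h1 h2 (by decide)
          omega
      exact preserves_of_add 2 hγ' hτ'
    · -- T has no finite total dominating set: everything is zero
      have hγ0 : gammaT T = 0 := gammaT_eq_zero (fun D hD => hdomne ⟨D, hD⟩)
      have hcovempty : ∀ X : Finset V, ¬ _root_.IsVertexCover T X := fun X hX =>
        hdomne (dom_of_cover hdeg hX)
      have hτ0 : tau T = 0 := tau_eq_zero hcovempty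
      have hγ'0 : gammaT G' = 0 := gammaT_eq_zero (fun D' hD' =>
        hdomne ⟨_, dom_down_insert hD' hw⟩)
      have hτ'0 : tau G' = 0 := tau_eq_zero (fun X' hX' => hcovempty _ (cover_toLeft hX'))
      exact preserves_of_add 0 (by omega) (by omega)
  · -- u is isolated: V = {u}
    push_neg at hnb
    have hall : ∀ v : V, v = u := by
      intro v
      by_contra hvu
      obtain ⟨x, hx⟩ := exists_adj_of_conn hT.isConnected (show v ≠ u from hvu)
      exact hnb x hx
    have hTedge : ∀ a b : V, ¬ T.Adj a b := by
      intro a b hab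
      rw [hall a, hall b] at hab
      exact hab.ne rfl
    have hγ0 : gammaT T = 0 := gammaT_eq_zero (fun D hD => by
      obtain ⟨x, hx, hadj⟩ := hD u
      exact hTedge _ _ hadj)
    have hτ0 : tau T = 0 := by
      have h := tau_le (G := T) (X := ∅) (fun a b hab => absurd hab (hTedge a b))
      simpa using h
    have hup : IsTotalDomSet G' (upSet (∅ : Finset V) ({1, 2} : Finset (Fin 4))) := by
      rintro (a | a)
      · have ha : a = u := hall a
        subst ha
        exact ⟨inr 1, mem_upSet_inr.2 (by decide), gs_lr.2 ⟨rfl, rfl⟩⟩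
      · fin_cases a
        · exact ⟨inr 1, mem_upSet_inr.2 (by decide), gs_rr.2 (p4 (by decide))⟩
        · exact ⟨inr 2, mem_upSet_inr.2 (by decide), gs_rr.2 (p4 (by decide))⟩
        · exact ⟨inr 1, mem_upSet_inr.2 (by decide), gs_rr.2 (p4 (by decide))⟩
        · exact ⟨inr 2, mem_upSet_inr.2 (by decide), gs_rr.2 (p4 (by decide))⟩
    have hcup : _root_.IsVertexCover G' (upSet (∅ : Finset V) ({1, 3} : Finset (Fin 4))) := by
      rintro (a | a) (b | b) hadj
      · exact absurd (gs_ll.1 hadj) (hTedge a b)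
      · obtain ⟨rfl, rfl⟩ := gs_lr.1 hadj
        exact Or.inr (mem_upSet_inr.2 (by decide))
      · obtain ⟨rfl, rfl⟩ := gs_lr.1 hadj.symm
        exact Or.inl (mem_upSet_inr.2 (by decide))
      · have hb := gs_rr.1 hadj
        rw [SimpleGraph.pathGraph_adj] at hb
        have hmem : a ∈ ({1, 3} : Finset (Fin 4)) ∨ b ∈ ({1, 3} : Finset (Fin 4)) := by
          fin_cases a <;> fin_cases b <;> revert hb <;> decide
        rcases hmem with h | h
        · exact Or.inl (mem_upSet_inr.2 h)
        · exact Or.inr (mem_upSet_inr.2 h)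
    have hγ'2 : gammaT G' = 2 := by
      apply le_antisymm
      · have h := gammaT_le hup
        rw [card_upSet] at h
        simpa using h
      · refine le_gammaT ⟨_, hup⟩ (fun D' hD' => ?_)
        obtain ⟨x, hx, hadjx⟩ := hD' (inr 0)
        obtain ⟨y, hy, hadjy⟩ := hD' x
        exact two_le_card hy hx (fun h => hadjy.ne h.symm)
    have hτ'2 : tau G' = 2 := by
      apply le_antisymm
      · have h := tau_le hcup
        rw [card_upSet] at h
        simpa using h
      · refine le_tau ⟨_, hcup⟩ (fun X' hX' => ?_)
        have e01 : inl u ∈ X' ∨ inr (1 : Fin 4) ∈ X' ∨ inr (0 : Fin 4) ∈ X' := by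
          rcases hX' ((gs_rr (a := (0 : Fin 4)) (b := 1)).2 (p4 (by decide))) with h | h
          · exact Or.inr (Or.inr h)
          · exact Or.inr (Or.inl h)
        have e23 : inr (2 : Fin 4) ∈ X' ∨ inr (3 : Fin 4) ∈ X' := by
          rcases hX' ((gs_rr (a := (2 : Fin 4)) (b := 3)).2 (p4 (by decide))) with h | h
          · exact Or.inl h
          · exact Or.inr h
        rcases e01 with h1 | h1 | h1 <;> rcases e23 with h2 | h2 <;>
          exact two_le_card h1 h2 (by rintro h; first | exact absurd h (by simp) |
            exact absurd (inr_injective h) (by decide))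
    exact preserves_of_add 2 (by omega) (by omega)

end Ops4
/-- Each of the operations `O_1`–`O_4` preserves the difference `γ_t - τ`, and in
particular preserves the equality `γ_t = τ`. -/
theorem stmt15 {V : Type*} (T : SimpleGraph V) (hT : T.IsTree) :
    (∀ u : V, (∃ D : Finset V, IsGttSet T D ∧ u ∈ D) →
      PreservesGtTau T (graphSum T (SimpleGraph.pathGraph 4) u 0)) ∧
    (∀ u : V, (∃ D : Finset V, IsGttSet T D ∧ u ∈ D) →
      PreservesGtTau T (graphSum T (⊥ : SimpleGraph Unit) u ())) ∧
    (∀ u : V, (∃ D : Finset V, IsGttSet T D ∧ u ∈ D) → ¬ QuasiIsolated T u →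
      PreservesGtTau T (graphSum T (SimpleGraph.pathGraph 2) u 0)) ∧
    (∀ u : V, ¬ QuasiIsolated T u →
      PreservesGtTau T (graphSum T (SimpleGraph.pathGraph 4) u 1)) := by
  refine ⟨?_, ?_, ?_, ?_⟩
  · rintro u ⟨D, hD, hu⟩
    exact op1 hD hu
  · rintro u ⟨D, hD, hu⟩
    exact op2 hD hu
  · rintro u ⟨D, hD, hu⟩ hQI
    exact op3 hD hu hQI
  · intro u hQI
    exact op4 hT hQI
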